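/- arXiv:math/0412003 — 3 statements merged into one kernel-verified Lean document; each statement's English description precedes it below -/
import Mathlib

section
/- Let f be an integrable probability density on ℝ satisfying Poisson summation, with ∑_{k≠0}|f̂(Tk)/k| → 0 as T → ∞. Then for any [a,b] ⊆ [0,1], ∑_{k∈ℤ}(1/T)∫_a^b f((x+k)/T)dx = (b−a) + ∑_{k≠0} f̂(Tk)·(e^{2πibk}−e^{2πiak})/(2πik), which tends to b−a as T → ∞. -/
open MeasureTheory Real Filter
open scoped NNReal ENNReal

/-- The Fourier transform `f̂(y) = ∫ f(x) e^{-2πixy} dx`. -/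
noncomputable def fourierTransform (f : ℝ → ℝ) (y : ℝ) : ℂ :=
  ∫ x : ℝ, (f x : ℂ) * Complex.exp (-(2 * π * x * y) * Complex.I)

lemma qmp_aff (T : ℝ) (hT : 0 < T) (k : ℝ) :
    Measure.QuasiMeasurePreserving (fun x : ℝ => (x + k) / T) volume volume := by
  have h1 : Measure.QuasiMeasurePreserving (fun x : ℝ => x + k) volume volume :=
    (measurePreserving_add_right volume k).quasiMeasurePreserving
  have h2 : Measure.QuasiMeasurePreserving (fun x : ℝ => x / T) volume volume := by
    refine ⟨measurable_id.div_const T, ?_⟩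
    have : (fun x : ℝ => x / T) = fun x => T⁻¹ * x := by funext x; rw [div_eq_inv_mul]
    rw [this, Real.map_volume_mul_left (inv_ne_zero hT.ne')]
    exact Measure.smul_absolutelyContinuous
  exact h2.comp h1

lemma pd_Ioc : Pairwise (Function.onFun Disjoint (fun k : ℤ => Set.Ioc (k : ℝ) (k + 1))) := by
  have key : ∀ i j : ℤ, i < j → Disjoint (Set.Ioc (i:ℝ) (i+1)) (Set.Ioc (j:ℝ) (j+1)) := by
    intro i j h
    refine Set.Ioc_disjoint_Ioc.2 ?_
    have : (i:ℝ) + 1 ≤ j := by exact_mod_cast h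
    exact min_le_of_left_le (le_max_of_le_right this)
  intro i j hij
  rcases hij.lt_or_gt with h | h
  · exact key i j h
  · exact (key j i h).symm

-- master lintegral computation
lemma tsum_lintegral_eq (f : ℝ → ℝ) (hint : Integrable f)
    (hpos : ∀ x, 0 ≤ f x) (hprob : ∫ x, f x = 1) (T : ℝ) (hT : 0 < T) :
    ∑' k : ℤ, ∫⁻ x in Set.Ioc (0:ℝ) 1, ENNReal.ofReal (f ((x + k) / T)) =
      ENNReal.ofReal T := by
  -- measurable representative
  have hae : AEMeasurable (fun x : ℝ => ENNReal.ofReal (f x)) volume :=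
    hint.aemeasurable.ennreal_ofReal
  set F : ℝ → ENNReal := hae.mk _ with hF
  have hFm : Measurable F := hae.measurable_mk
  have hFe : (fun x => ENNReal.ofReal (f x)) =ᵐ[volume] F := hae.ae_eq_mk
  -- step 1: replace f by F inside each integral
  have step1 : ∀ k : ℤ, ∫⁻ x in Set.Ioc (0:ℝ) 1, ENNReal.ofReal (f ((x + k) / T)) =
      ∫⁻ x in Set.Ioc (0:ℝ) 1, F ((x + k) / T) := by
    intro k
    refine lintegral_congr_ae ?_
    have h := (qmp_aff T hT (k:ℝ)).ae_eq_comp hFe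
    exact (ae_restrict_of_ae h)
  -- step 2: shift
  have step2 : ∀ k : ℤ, ∫⁻ x in Set.Ioc (0:ℝ) 1, F ((x + k) / T) =
      ∫⁻ y in Set.Ioc (k:ℝ) (k + 1), F (y / T) := by
    intro k
    have hemb : MeasurableEmbedding (fun x : ℝ => x + (k:ℝ)) :=
      (Homeomorph.addRight (k:ℝ)).measurableEmbedding
    have := (measurePreserving_add_right volume (k:ℝ)).setLIntegral_comp_emb hemb
      (fun y => F (y / T)) (Set.Ioc 0 1)
    rw [this, Set.image_add_const_Ioc]
    norm_num [add_comm]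
  -- step 3: sum over shifted intervals
  have step3 : ∑' k : ℤ, ∫⁻ y in Set.Ioc (k:ℝ) (k + 1), F (y / T) =
      ∫⁻ y, F (y / T) := by
    rw [← lintegral_iUnion (fun k => measurableSet_Ioc) pd_Ioc]
    rw [iUnion_Ioc_intCast, Measure.restrict_univ]
  -- step 4: scaling
  have step4 : ∫⁻ y, F (y / T) = ENNReal.ofReal T * ∫⁻ y, F y := by
    have hmap : Measure.map (fun y : ℝ => T⁻¹ * y) volume = ENNReal.ofReal T • volume := by
      rw [Real.map_volume_mul_left (inv_ne_zero hT.ne')]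
      congr 1
      rw [inv_inv, abs_of_pos hT]
    have : ∫⁻ y, F (y / T) = ∫⁻ y, F (T⁻¹ * y) := by
      simp only [div_eq_inv_mul]
    rw [this, ← lintegral_map hFm (measurable_const_mul T⁻¹), hmap, lintegral_smul_measure, smul_eq_mul]
  -- step 5: total integral
  have step5 : ∫⁻ y, F y = 1 := by
    rw [← lintegral_congr_ae hFe,
      ← ofReal_integral_eq_lintegral_ofReal hint (Filter.Eventually.of_forall hpos), hprob]
    simp
  calc ∑' k : ℤ, ∫⁻ x in Set.Ioc (0:ℝ) 1, ENNReal.ofReal (f ((x + k) / T))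
      = ∑' k : ℤ, ∫⁻ y in Set.Ioc (k:ℝ) (k + 1), F (y / T) := by
        refine tsum_congr fun k => ?_; rw [step1 k, step2 k]
    _ = ENNReal.ofReal T * 1 := by rw [step3, step4, step5]
    _ = ENNReal.ofReal T := by rw [mul_one]


lemma ae_summable (f : ℝ → ℝ) (hint : Integrable f)
    (hpos : ∀ x, 0 ≤ f x) (hprob : ∫ x, f x = 1) (T : ℝ) (hT : 0 < T) :
    ∀ᵐ x ∂(volume.restrict (Set.Ioc (0:ℝ) 1)), Summable (fun k : ℤ => f ((x + k) / T)) := by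
  have hmeas : ∀ k : ℤ, AEMeasurable (fun x : ℝ => ENNReal.ofReal (f ((x + k) / T)))
      (volume.restrict (Set.Ioc (0:ℝ) 1)) := fun k =>
    (hint.aemeasurable.ennreal_ofReal.comp_quasiMeasurePreserving (qmp_aff T hT k)).restrict
  have hfin : ∫⁻ x in Set.Ioc (0:ℝ) 1, ∑' k : ℤ, ENNReal.ofReal (f ((x + k) / T)) ≠ ⊤ := by
    rw [lintegral_tsum hmeas, tsum_lintegral_eq f hint hpos hprob T hT]
    exact ENNReal.ofReal_ne_top
  filter_upwards [ae_lt_top' (AEMeasurable.ennreal_tsum hmeas) hfin] with x hx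
  rw [show (fun k : ℤ => f ((x + k) / T)) = fun k : ℤ => (((f ((x + k) / T)).toNNReal : ℝ≥0) : ℝ)
    from funext fun k => (Real.coe_toNNReal _ (hpos _)).symm, NNReal.summable_coe]
  refine ENNReal.tsum_coe_ne_top_iff_summable.1 ?_
  convert hx.ne using 2 with k
  rfl

lemma summable_fourier (f : ℝ → ℝ) (hint : Integrable f)
    (hpos : ∀ x, 0 ≤ f x) (hprob : ∫ x, f x = 1)
    (hPoisson : ∀ T : ℝ, 0 < T → ∀ x : ℝ,
      ∑' k : ℤ, ((f ((x + k) / T) : ℂ)) =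
        T * ∑' k : ℤ, fourierTransform f (T * k) * Complex.exp (2 * π * Complex.I * x * k))
    (T : ℝ) (hT : 0 < T) :
    Summable (fun k : ℤ => fourierTransform f (T * k)) := by
  by_contra hns
  have hnsx : ∀ x : ℝ, ¬ Summable (fun k : ℤ =>
      fourierTransform f (T * k) * Complex.exp (2 * π * Complex.I * x * k)) := by
    intro x hsum
    apply hns
    rw [← summable_norm_iff] at hsum ⊢
    convert hsum using 2 with k
    have hre : (2 * (π:ℂ) * Complex.I * x * k) = ((2 * π * x * k : ℝ) : ℂ) * Complex.I := by
      push_cast; ring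
    rw [norm_mul, hre, Complex.norm_exp_ofReal_mul_I, mul_one]
  have hz : ∀ x : ℝ, ∑' k : ℤ, ((f ((x + k) / T) : ℂ)) = 0 := fun x => by
    rw [hPoisson T hT x, tsum_eq_zero_of_not_summable (hnsx x), mul_zero]
  have h0 : ∀ᵐ x ∂(volume.restrict (Set.Ioc (0:ℝ) 1)), ∀ k : ℤ, f ((x + k) / T) = 0 := by
    filter_upwards [ae_summable f hint hpos hprob T hT] with x hx
    have hs0 : ∑' k : ℤ, f ((x + k) / T) = 0 := by
      have : ((∑' k : ℤ, f ((x + k) / T) : ℝ) : ℂ) = 0 := by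
        rw [Complex.ofReal_tsum]; exact hz x
      exact_mod_cast this
    intro k
    have h1 := hx.le_tsum k (fun j _ => hpos _)
    have h2 := hpos ((x + k) / T)
    linarith [hs0 ▸ h1]
  have hz2 : ∀ k : ℤ, ∫⁻ x in Set.Ioc (0:ℝ) 1, ENNReal.ofReal (f ((x + k) / T)) = 0 := by
    intro k
    have he : (fun x : ℝ => ENNReal.ofReal (f ((x + k) / T)))
        =ᵐ[volume.restrict (Set.Ioc (0:ℝ) 1)] 0 := by
      filter_upwards [h0] with x hx
      simp [hx k]
    rw [lintegral_congr_ae he]; simp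
  have := tsum_lintegral_eq f hint hpos hprob T hT
  rw [tsum_congr hz2, tsum_zero] at this
  exact absurd this.symm (by simp [ENNReal.ofReal_pos.2 hT, ne_eq, ENNReal.ofReal_eq_zero, not_le, hT])

lemma Jk_lemma (a b : ℝ) (hab : a ≤ b) (k : ℤ) (hk : k ≠ 0) :
    ∫ x in Set.Ioc a b, Complex.exp (2 * ↑π * Complex.I * ↑x * (k : ℂ)) =
      (Complex.exp (2 * ↑π * Complex.I * ↑b * (k : ℂ)) -
        Complex.exp (2 * ↑π * Complex.I * ↑a * (k : ℂ))) / (2 * ↑π * Complex.I * (k : ℂ)) := by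
  have hc : (2 * (π:ℂ) * Complex.I * (k : ℂ)) ≠ 0 := by
    refine mul_ne_zero (mul_ne_zero (mul_ne_zero two_ne_zero ?_) Complex.I_ne_zero) ?_
    · exact Complex.ofReal_ne_zero.2 Real.pi_ne_zero
    · exact_mod_cast hk
  have h1 : ∫ x in Set.Ioc a b, Complex.exp (2 * ↑π * Complex.I * ↑x * (k : ℂ)) =
      ∫ x in a..b, Complex.exp ((2 * ↑π * Complex.I * (k : ℂ)) * ↑x) := by
    rw [intervalIntegral.integral_of_le hab]
    congr 1
    funext x
    congr 1
    ring
  rw [h1, integral_exp_mul_complex hc]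
  congr 2 <;> ring_nf

lemma J0_lemma (a b : ℝ) (hab : a ≤ b) :
    ∫ x in Set.Ioc a b, Complex.exp (2 * ↑π * Complex.I * ↑x * ((0:ℤ) : ℂ)) = ((b - a : ℝ) : ℂ) := by
  have h1 : ∀ x : ℝ, Complex.exp (2 * ↑π * Complex.I * ↑x * ((0:ℤ):ℂ)) = 1 := by
    intro x; norm_num
  simp only [h1]
  rw [setIntegral_const, Real.volume_real_Ioc_of_le hab]
  simp

set_option maxHeartbeats 1000000 in
lemma poisson_identity (f : ℝ → ℝ) (hint : Integrable f)
    (hpos : ∀ x, 0 ≤ f x) (hprob : ∫ x, f x = 1)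
    (hPoisson : ∀ T : ℝ, 0 < T → ∀ x : ℝ,
      ∑' k : ℤ, ((f ((x + k) / T) : ℂ)) =
        T * ∑' k : ℤ, fourierTransform f (T * k) * Complex.exp (2 * π * Complex.I * x * k))
    (a b : ℝ) (ha : 0 ≤ a) (hab : a ≤ b) (hb : b ≤ 1)
    (hf0 : fourierTransform f 0 = 1) :
    ∀ T : ℝ, 0 < T →
      ∑' k : ℤ, (((1 / T) * ∫ x in a..b, f ((x + k) / T) : ℝ) : ℂ) =
        (b - a : ℂ) + ∑' k : {k : ℤ // k ≠ 0},
          fourierTransform f (T * (k : ℤ)) *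
            (Complex.exp (2 * π * Complex.I * b * (k : ℤ)) -
              Complex.exp (2 * π * Complex.I * a * (k : ℤ))) /
            (2 * π * Complex.I * (k : ℤ)) := by
  have hsub : Set.Ioc a b ⊆ Set.Ioc (0:ℝ) 1 := Set.Ioc_subset_Ioc ha hb
  intro T hT
  set μ := volume.restrict (Set.Ioc a b) with hμdef
  have hS : Summable (fun k : ℤ => fourierTransform f (T * k)) :=
    summable_fourier f hint hpos hprob hPoisson T hT
  have hSn : Summable (fun k : ℤ => ‖fourierTransform f (T * k)‖) :=
    summable_norm_iff.2 hS
  have hSnn : Summable (fun k : ℤ => ‖fourierTransform f (T * k)‖₊) := by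
    rw [← NNReal.summable_coe]
    simpa [coe_nnnorm] using hSn
  have hmeasR : ∀ k : ℤ, AEMeasurable (fun x : ℝ => f ((x + k) / T)) μ := fun k =>
    (hint.aemeasurable.comp_quasiMeasurePreserving (qmp_aff T hT k)).restrict
  have hmeasC : ∀ k : ℤ, AEStronglyMeasurable (fun x : ℝ => ((f ((x + k) / T) : ℝ) : ℂ)) μ :=
    fun k => Complex.continuous_ofReal.comp_aestronglyMeasurable
      (hmeasR k).aestronglyMeasurable
  have hnorm_eq : ∀ k : ℤ, ∫⁻ x, ‖((f ((x + k) / T) : ℝ) : ℂ)‖₊ ∂μ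
      = ∫⁻ x in Set.Ioc a b, ENNReal.ofReal (f ((x + k) / T)) := by
    intro k
    refine lintegral_congr fun x => ?_
    rw [Complex.nnnorm_real]; exact Real.enorm_eq_ofReal (hpos _)
  have htot : ∑' k : ℤ, ∫⁻ x, ‖((f ((x + k) / T) : ℝ) : ℂ)‖₊ ∂μ ≠ ⊤ := by
    have hle : ∑' k : ℤ, ∫⁻ x in Set.Ioc a b, ENNReal.ofReal (f ((x + k) / T))
        ≤ ENNReal.ofReal T := by
      rw [← tsum_lintegral_eq f hint hpos hprob T hT]
      exact ENNReal.tsum_le_tsum fun k =>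
        lintegral_mono' (Measure.restrict_mono hsub le_rfl) le_rfl
    rw [tsum_congr hnorm_eq]
    exact ne_top_of_le_ne_top ENNReal.ofReal_ne_top hle
  have hexpcont : ∀ k : ℤ, Continuous
      (fun x : ℝ => Complex.exp (2 * ↑π * Complex.I * ↑x * (k:ℤ))) := fun k =>
    Complex.continuous_exp.comp
      ((continuous_const.mul Complex.continuous_ofReal).mul continuous_const)
  have hmeas2 : ∀ k : ℤ, AEStronglyMeasurable
      (fun x : ℝ => fourierTransform f (T * k) *
        Complex.exp (2 * ↑π * Complex.I * ↑x * (k:ℤ))) μ := fun k =>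
    (continuous_const.mul (hexpcont k)).aestronglyMeasurable
  have hexp1 : ∀ (k : ℤ) (x : ℝ),
      ‖Complex.exp (2 * ↑π * Complex.I * ↑x * (k:ℤ))‖₊ = 1 := by
    intro k x
    have hre : (2 * (π:ℂ) * Complex.I * x * (k:ℤ)) = ((2 * π * x * k : ℝ) : ℂ) * Complex.I := by
      push_cast; ring
    refine NNReal.coe_injective ?_
    rw [coe_nnnorm, hre, Complex.norm_exp_ofReal_mul_I, NNReal.coe_one]
  have hnn2 : ∀ k : ℤ, ∫⁻ x, ‖fourierTransform f (T * k) *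
        Complex.exp (2 * ↑π * Complex.I * ↑x * (k:ℤ))‖₊ ∂μ
      = (‖fourierTransform f (T * k)‖₊ : ℝ≥0∞) * ENNReal.ofReal (b - a) := by
    intro k
    have heq : ∀ x : ℝ, (‖fourierTransform f (T * k) *
        Complex.exp (2 * ↑π * Complex.I * ↑x * (k:ℤ))‖₊ : ℝ≥0∞)
        = (‖fourierTransform f (T * k)‖₊ : ℝ≥0∞) := by
      intro x
      rw [nnnorm_mul, hexp1 k x, mul_one]
    rw [lintegral_congr heq, lintegral_const, hμdef, Measure.restrict_apply_univ,
      Real.volume_Ioc]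
  have htot2 : ∑' k : ℤ, ∫⁻ x, ‖fourierTransform f (T * k) *
        Complex.exp (2 * ↑π * Complex.I * ↑x * (k:ℤ))‖₊ ∂μ ≠ ⊤ := by
    rw [tsum_congr hnn2, ENNReal.tsum_mul_right]
    exact ENNReal.mul_ne_top (ENNReal.tsum_coe_ne_top_iff_summable.2 hSnn)
      ENNReal.ofReal_ne_top
  set J : ℤ → ℂ := fun k => ∫ x in Set.Ioc a b,
    Complex.exp (2 * ↑π * Complex.I * ↑x * (k:ℤ)) with hJdef
  have hJ0 : J 0 = ((b - a : ℝ) : ℂ) := J0_lemma a b hab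
  have hJk : ∀ k : ℤ, k ≠ 0 → J k =
      (Complex.exp (2 * ↑π * Complex.I * ↑b * (k:ℤ)) -
        Complex.exp (2 * ↑π * Complex.I * ↑a * (k:ℤ))) / (2 * ↑π * Complex.I * (k:ℤ)) :=
    fun k hk => Jk_lemma a b hab k hk
  have hgsum : Summable (fun k : ℤ => fourierTransform f (T * k) * J k) := by
    refine Summable.of_norm_bounded hSn fun k => ?_
    rw [norm_mul]
    have hJle : ‖J k‖ ≤ 1 := by
      refine le_trans (norm_integral_le_of_norm_le_const (C := 1)
        (Filter.Eventually.of_forall fun x => ?_)) ?_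
      · have h2 := hexp1 k x
        rw [← coe_nnnorm, h2, NNReal.coe_one]
      · rw [measureReal_restrict_apply_univ, Real.volume_real_Ioc_of_le hab]
        linarith
    calc ‖fourierTransform f (T * k)‖ * ‖J k‖
        ≤ ‖fourierTransform f (T * k)‖ * 1 :=
          mul_le_mul_of_nonneg_left hJle (norm_nonneg _)
      _ = ‖fourierTransform f (T * k)‖ := mul_one _
  calc ∑' k : ℤ, (((1 / T) * ∫ x in a..b, f ((x + k) / T) : ℝ) : ℂ)
      = ∑' k : ℤ, ((1 / T : ℝ) : ℂ) * ∫ x, ((f ((x + k) / T) : ℝ) : ℂ) ∂μ := by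
        refine tsum_congr fun k => ?_
        rw [intervalIntegral.integral_of_le hab, Complex.ofReal_mul, hμdef]
        congr 1
        exact (integral_ofReal).symm
    _ = ((1 / T : ℝ) : ℂ) * ∑' k : ℤ, ∫ x, ((f ((x + k) / T) : ℝ) : ℂ) ∂μ := tsum_mul_left
    _ = ((1 / T : ℝ) : ℂ) * ∫ x, ∑' k : ℤ, ((f ((x + k) / T) : ℝ) : ℂ) ∂μ := by
        rw [integral_tsum hmeasC htot]
    _ = ((1 / T : ℝ) : ℂ) * ∫ x, (T : ℂ) * ∑' k : ℤ, fourierTransform f (T * k) *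
          Complex.exp (2 * ↑π * Complex.I * ↑x * (k:ℤ)) ∂μ := by
        congr 1
        exact congrArg (fun g => ∫ x, g x ∂μ) (funext fun x => hPoisson T hT x)
    _ = ∫ x, ∑' k : ℤ, fourierTransform f (T * k) *
          Complex.exp (2 * ↑π * Complex.I * ↑x * (k:ℤ)) ∂μ := by
        rw [integral_const_mul, ← mul_assoc, Complex.ofReal_div, Complex.ofReal_one,
          div_mul_cancel₀, one_mul]
        exact_mod_cast hT.ne'
    _ = ∑' k : ℤ, fourierTransform f (T * k) * J k := by
        rw [integral_tsum hmeas2 htot2]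
        exact tsum_congr fun k => integral_const_mul _ _
    _ = (b - a : ℂ) + ∑' k : {k : ℤ // k ≠ 0},
          fourierTransform f (T * (k : ℤ)) *
            (Complex.exp (2 * π * Complex.I * b * (k : ℤ)) -
              Complex.exp (2 * π * Complex.I * a * (k : ℤ))) /
            (2 * π * Complex.I * (k : ℤ)) := by
        rw [hgsum.tsum_eq_add_tsum_ite 0]
        congr 1
        · rw [show ((0:ℤ):ℝ) = (0:ℝ) by norm_cast, mul_zero, hf0, one_mul, hJ0]
          push_cast
          ring
        · have hind : ∀ k : ℤ, (if k = 0 then 0 else fourierTransform f (T * k) * J k)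
              = Set.indicator {k : ℤ | k ≠ 0} (fun k => fourierTransform f (T * k) * J k) k := by
            intro k
            by_cases hk : k = 0 <;> simp [Set.indicator_apply, hk]
          rw [tsum_congr hind, ← tsum_subtype]
          refine (tsum_congr fun k => ?_).symm
          rw [hJk (k : ℤ) k.2, mul_div_assoc]

set_option maxHeartbeats 2000000 in
/-- For an integrable probability density `f` satisfying Poisson summation for its
translates and dilates, with `∑_{k ≠ 0} |f̂(Tk)/k| → 0` as `T → ∞`: for any
`[a,b] ⊆ [0,1]`, we have for each `T > 0`
`∑_{k ∈ ℤ} (1/T) ∫_a^b f((x+k)/T) dx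
  = (b-a) + ∑_{k ≠ 0} f̂(Tk) (e^{2πibk} - e^{2πiak})/(2πik)`,
and the left side tends to `b - a` as `T → ∞`. -/
theorem poisson_main_term (f : ℝ → ℝ) (hint : Integrable f)
    (hpos : ∀ x, 0 ≤ f x) (hprob : ∫ x, f x = 1)
    (hPoisson : ∀ T : ℝ, 0 < T → ∀ x : ℝ,
      ∑' k : ℤ, ((f ((x + k) / T) : ℂ)) =
        T * ∑' k : ℤ, fourierTransform f (T * k) * Complex.exp (2 * π * Complex.I * x * k))
    (hdecay : Filter.Tendsto
      (fun T : ℝ => ∑' k : {k : ℤ // k ≠ 0}, ‖fourierTransform f (T * (k : ℤ)) / ((k : ℤ) : ℂ)‖)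
      Filter.atTop (nhds 0))
    (a b : ℝ) (ha : 0 ≤ a) (hab : a ≤ b) (hb : b ≤ 1) :
    (∀ T : ℝ, 0 < T →
      ∑' k : ℤ, (((1 / T) * ∫ x in a..b, f ((x + k) / T) : ℝ) : ℂ) =
        (b - a : ℂ) + ∑' k : {k : ℤ // k ≠ 0},
          fourierTransform f (T * (k : ℤ)) *
            (Complex.exp (2 * π * Complex.I * b * (k : ℤ)) -
              Complex.exp (2 * π * Complex.I * a * (k : ℤ))) /
            (2 * π * Complex.I * (k : ℤ))) ∧
    Filter.Tendsto
      (fun T : ℝ => ∑' k : ℤ, (1 / T) * ∫ x in a..b, f ((x + k) / T))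
      Filter.atTop (nhds (b - a)) := by
  have hf0 : fourierTransform f 0 = 1 := by
    unfold fourierTransform
    have he : ∀ x : ℝ, ((f x : ℝ) : ℂ) * Complex.exp (-(2 * ↑π * ↑x * ((0:ℝ):ℂ)) * Complex.I)
        = ((f x : ℝ) : ℂ) := by
      intro x
      norm_num
    rw [funext he]
    have h2 := integral_ofReal (𝕜 := ℂ) (f := f) (μ := volume)
    rw [hprob] at h2
    simpa using h2
  have hsub : Set.Ioc a b ⊆ Set.Ioc (0:ℝ) 1 := Set.Ioc_subset_Ioc ha hb
  have key := poisson_identity f hint hpos hprob hPoisson a b ha hab hb hf0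
  refine ⟨key, ?_⟩
  rw [tendsto_iff_norm_sub_tendsto_zero]
  have hD : Filter.Tendsto (fun T : ℝ => (1 / π) *
      ∑' k : {k : ℤ // k ≠ 0}, ‖fourierTransform f (T * (k : ℤ)) / ((k : ℤ) : ℂ)‖)
      Filter.atTop (nhds 0) := by
    simpa using hdecay.const_mul (1 / π)
  refine squeeze_zero' (Filter.Eventually.of_forall fun T => norm_nonneg _) ?_ hD
  filter_upwards [Filter.eventually_gt_atTop (0:ℝ)] with T hT
  have hS : Summable (fun k : ℤ => fourierTransform f (T * k)) :=
    summable_fourier f hint hpos hprob hPoisson T hT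
  have hSn : Summable (fun k : ℤ => ‖fourierTransform f (T * k)‖) := summable_norm_iff.2 hS
  have hSsub : Summable (fun k : {k : ℤ // k ≠ 0} => ‖fourierTransform f (T * (k : ℤ))‖) :=
    hSn.comp_injective Subtype.coe_injective
  have hbsum : Summable (fun k : {k : ℤ // k ≠ 0} =>
      ‖fourierTransform f (T * (k : ℤ)) / ((k : ℤ) : ℂ)‖) := by
    refine Summable.of_nonneg_of_le (fun k => norm_nonneg _) (fun k => ?_) hSsub
    rw [norm_div]
    refine div_le_self (norm_nonneg _) ?_
    rw [show (((k : ℤ) : ℂ)) = (((k : ℤ) : ℝ) : ℂ) by push_cast; rfl, Complex.norm_real,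
      Real.norm_eq_abs]
    exact_mod_cast Int.one_le_abs k.2
  have hexpnorm : ∀ (t : ℝ) (k : ℤ), ‖Complex.exp (2 * ↑π * Complex.I * ↑t * (k:ℤ))‖ = 1 := by
    intro t k
    have hre : (2 * (π:ℂ) * Complex.I * t * (k:ℤ)) = ((2 * π * t * k : ℝ) : ℂ) * Complex.I := by
      push_cast; ring
    rw [hre, Complex.norm_exp_ofReal_mul_I]
  have hterm : ∀ k : {k : ℤ // k ≠ 0},
      ‖fourierTransform f (T * (k : ℤ)) *
        (Complex.exp (2 * π * Complex.I * b * (k : ℤ)) -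
          Complex.exp (2 * π * Complex.I * a * (k : ℤ))) / (2 * π * Complex.I * (k : ℤ))‖
      ≤ (1 / π) * ‖fourierTransform f (T * (k : ℤ)) / ((k : ℤ) : ℂ)‖ := by
    intro k
    have hK : (1:ℝ) ≤ ‖(((k : ℤ)) : ℂ)‖ := by
      rw [show ((((k : ℤ)) : ℂ)) = ((((k : ℤ)) : ℝ) : ℂ) by push_cast; rfl, Complex.norm_real,
        Real.norm_eq_abs]
      exact_mod_cast Int.one_le_abs k.2
    have hK0 : (0:ℝ) < ‖(((k : ℤ)) : ℂ)‖ := lt_of_lt_of_le one_pos hK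
    have hcnorm : ‖(2 * (π:ℂ) * Complex.I * ((k : ℤ) : ℂ))‖ = 2 * π * ‖(((k : ℤ)) : ℂ)‖ := by
      rw [show (2 * (π:ℂ) * Complex.I * ((k : ℤ) : ℂ)) =
        ((2 * π : ℝ) : ℂ) * Complex.I * ((k : ℤ) : ℂ) by push_cast; ring]
      rw [norm_mul, norm_mul, Complex.norm_real, Complex.norm_I, mul_one, Real.norm_eq_abs,
        abs_of_pos (by positivity)]
    have hE : ‖Complex.exp (2 * ↑π * Complex.I * ↑b * ((k:ℤ):ℂ)) -
        Complex.exp (2 * ↑π * Complex.I * ↑a * ((k:ℤ):ℂ))‖ ≤ 2 := by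
      refine le_trans (norm_sub_le _ _) ?_
      rw [hexpnorm b (k : ℤ), hexpnorm a (k : ℤ)]
      norm_num
    rw [norm_div, norm_mul, hcnorm, norm_div]
    rw [show (((k : ℤ)) : ℂ) = ((((k : ℤ)) : ℝ) : ℂ) from by push_cast; rfl] at *
    calc ‖fourierTransform f (T * (k : ℤ))‖ *
          ‖Complex.exp (2 * ↑π * Complex.I * ↑b * ((((k:ℤ)):ℝ):ℂ)) -
            Complex.exp (2 * ↑π * Complex.I * ↑a * ((((k:ℤ)):ℝ):ℂ))‖ /
          (2 * π * ‖((((k:ℤ)):ℝ):ℂ)‖)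
        ≤ ‖fourierTransform f (T * (k : ℤ))‖ * 2 / (2 * π * ‖((((k:ℤ)):ℝ):ℂ)‖) := by
          gcongr
      _ = (1 / π) * (‖fourierTransform f (T * (k : ℤ))‖ / ‖((((k:ℤ)):ℝ):ℂ)‖) := by
          field_simp
  have hnsum : Summable (fun k : {k : ℤ // k ≠ 0} =>
      ‖fourierTransform f (T * (k : ℤ)) *
        (Complex.exp (2 * π * Complex.I * b * (k : ℤ)) -
          Complex.exp (2 * π * Complex.I * a * (k : ℤ))) / (2 * π * Complex.I * (k : ℤ))‖) :=
    Summable.of_nonneg_of_le (fun k => norm_nonneg _) hterm (hbsum.mul_left (1 / π))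
  have hu := key T hT
  set S := ∑' k : {k : ℤ // k ≠ 0},
    fourierTransform f (T * (k : ℤ)) *
      (Complex.exp (2 * π * Complex.I * b * (k : ℤ)) -
        Complex.exp (2 * π * Complex.I * a * (k : ℤ))) /
      (2 * π * Complex.I * (k : ℤ)) with hSdef
  have huc : ((∑' k : ℤ, (1 / T) * ∫ x in a..b, f ((x + k) / T) : ℝ) : ℂ) =
      (b - a : ℂ) + S := by
    rw [Complex.ofReal_tsum]
    exact hu
  have hcast : (((∑' k : ℤ, (1 / T) * ∫ x in a..b, f ((x + k) / T)) - (b - a) : ℝ) : ℂ) = S := by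
    rw [Complex.ofReal_sub, huc]
    push_cast
    ring
  calc ‖(∑' k : ℤ, (1 / T) * ∫ x in a..b, f ((x + k) / T)) - (b - a)‖
      = ‖S‖ := by rw [← Complex.norm_real, hcast]
    _ ≤ ∑' k : {k : ℤ // k ≠ 0},
        ‖fourierTransform f (T * (k : ℤ)) *
          (Complex.exp (2 * π * Complex.I * b * (k : ℤ)) -
            Complex.exp (2 * π * Complex.I * a * (k : ℤ))) / (2 * π * Complex.I * (k : ℤ))‖ :=
        norm_tsum_le_tsum_norm hnsum
    _ ≤ ∑' k : {k : ℤ // k ≠ 0},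
        (1 / π) * ‖fourierTransform f (T * (k : ℤ)) / ((k : ℤ) : ℂ)‖ :=
        Summable.tsum_le_tsum hterm hnsum (hbsum.mul_left (1 / π))
    _ = (1 / π) * ∑' k : {k : ℤ // k ≠ 0},
        ‖fourierTransform f (T * (k : ℤ)) / ((k : ℤ) : ℂ)‖ := tsum_mul_left
end

section
/- If X is a Gaussian random variable with mean μ and variance σ², then for every [a,b] ⊆ [0,1], |P(X mod 1 ∈ [a,b]) − (b−a)| ≤ ∑_{k≠0} e^{−2π²σ²k²}·|e^{2πibk}−e^{2πiak}|/(2π|k|); in particular P(X mod 1 ∈ [a,b]) → b−a as σ → ∞ uniformly in μ. -/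
open MeasureTheory ProbabilityTheory Real
open scoped NNReal ENNReal

lemma summable_gauss_shift (α t : ℝ) (hα : 0 < α) :
    Summable fun n : ℤ => rexp (-α * ((n : ℝ) + t) ^ 2) := by
  have h := summable_pow_mul_jacobiTheta₂_term_bound (α * |t| / π) (T := α / π)
      (by positivity) 0
  refine Summable.of_nonneg_of_le (fun n => (Real.exp_pos _).le) (fun n => ?_)
      (by simpa using h)
  apply Real.exp_le_exp.2
  have h1 : -(2 : ℝ) * n * t ≤ 2 * |(n:ℝ)| * |t| := by
    have := neg_abs_le ((n:ℝ) * t)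
    rw [abs_mul] at this
    nlinarith
  have hπ := Real.pi_pos
  have e1 : -(π * (α / π * (n:ℝ) ^ 2 - 2 * (α * |t| / π) * |(n:ℝ)|))
      = -α * (n:ℝ)^2 + 2 * α * |(n:ℝ)| * |t| := by field_simp; ring
  rw [e1]
  nlinarith [sq_nonneg t, abs_nonneg ((n:ℝ)), abs_nonneg t, sq_abs ((n:ℝ))]

lemma summable_gauss_int (c : ℝ) (hc : 0 < c) :
    Summable fun n : ℤ => rexp (-c * (n : ℝ) ^ 2) := by
  simpa using summable_gauss_shift c 0 hc

lemma summable_pdf_shift (m σ : ℝ) (hσ : 0 < σ) (y : ℝ) :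
    Summable fun n : ℤ => gaussianPDFReal m (Real.toNNReal (σ ^ 2)) (y + (n : ℝ)) := by
  have hv : ((Real.toNNReal (σ ^ 2) : ℝ≥0) : ℝ) = σ ^ 2 := Real.coe_toNNReal _ (sq_nonneg σ)
  have h := (summable_gauss_shift (1 / (2 * σ ^ 2)) (y - m) (by positivity)).mul_left
    ((√(2 * π * σ ^ 2))⁻¹)
  refine h.congr fun n => ?_
  rw [gaussianPDFReal, hv]
  have he : -(1 / (2 * σ ^ 2)) * ((n:ℝ) + (y - m)) ^ 2
      = -(y + (n:ℝ) - m) ^ 2 / (2 * σ ^ 2) := by field_simp; ring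
  rw [he]

lemma gaussian_poisson (m σ : ℝ) (hσ : 0 < σ) (y : ℝ) :
    ((∑' n : ℤ, gaussianPDFReal m (Real.toNNReal (σ ^ 2)) (y + (n : ℝ))) : ℂ)
      = ∑' k : ℤ, (rexp (-2 * π ^ 2 * σ ^ 2 * (k : ℝ) ^ 2) : ℂ) *
          Complex.exp (-(2 * π * Complex.I * ((y : ℂ) - (m : ℂ))) * (k : ℂ)) := by
  have hπ := Real.pi_pos
  have hv : ((Real.toNNReal (σ ^ 2) : ℝ≥0) : ℝ) = σ ^ 2 := Real.coe_toNNReal _ (sq_nonneg σ)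
  set A : ℝ := 2 * π * σ ^ 2 with hA
  have hA0 : 0 < A := by positivity
  have ha : (0:ℝ) < ((A : ℂ)).re := by simpa using hA0
  have key := Complex.tsum_exp_neg_quadratic ha (-Complex.I * ((y : ℂ) - (m : ℂ)))
  -- rewrite the sqrt factor
  have hsq : (1 : ℂ) / (A : ℂ) ^ (1/2 : ℂ) = ((√A : ℝ) : ℂ)⁻¹ := by
    have h12 : (1/2 : ℂ) = ((1/2 : ℝ) : ℂ) := by norm_num
    rw [h12, ← Complex.ofReal_cpow hA0.le, ← Real.sqrt_eq_rpow, one_div]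
  -- each RHS term of `key` is the gaussian pdf term
  have hterm : ∀ n : ℤ, ((√A)⁻¹ : ℂ) *
      Complex.exp (-(π:ℂ) / (A : ℂ) * ((n : ℂ) + Complex.I * (-Complex.I * ((y:ℂ) - m))) ^ 2)
      = ((gaussianPDFReal m (Real.toNNReal (σ ^ 2)) (y + (n : ℝ)) : ℝ) : ℂ) := by
    intro n
    have h1 : Complex.I * (-Complex.I * ((y:ℂ) - m)) = (y:ℂ) - m := by
      rw [← mul_assoc, mul_neg, Complex.I_mul_I]; ring
    rw [h1]
    have h2 : -(π:ℂ) / (A : ℂ) * ((n : ℂ) + ((y:ℂ) - m)) ^ 2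
        = ((-(y + (n:ℝ) - m) ^ 2 / (2 * σ ^ 2) : ℝ) : ℂ) := by
      have hAne : (A : ℂ) ≠ 0 := by exact_mod_cast hA0.ne'
      have hπc : (π : ℂ) ≠ 0 := by exact_mod_cast Real.pi_ne_zero
      have hσc : (σ : ℂ) ≠ 0 := by exact_mod_cast hσ.ne'
      field_simp [hA, hπc, hσc]
      push_cast
      rw [hA]; push_cast; field_simp; ring
    rw [h2, ← Complex.ofReal_exp]
    rw [gaussianPDFReal, hv]
    push_cast [hA]
    ring
  -- each LHS term of `key` is the Fourier mode
  have hterm2 : ∀ k : ℤ, Complex.exp (-(π:ℂ) * (A:ℂ) * (k:ℂ) ^ 2 +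
        2 * (π:ℂ) * (-Complex.I * ((y : ℂ) - (m : ℂ))) * (k:ℂ))
      = (rexp (-2 * π ^ 2 * σ ^ 2 * (k : ℝ) ^ 2) : ℂ) *
          Complex.exp (-(2 * π * Complex.I * ((y : ℂ) - (m : ℂ))) * (k : ℂ)) := by
    intro k
    have h3 : (-(π:ℂ) * (A:ℂ) * (k:ℂ) ^ 2) = ((-2 * π ^ 2 * σ ^ 2 * (k : ℝ) ^ 2 : ℝ) : ℂ) := by
      push_cast [hA]; ring
    rw [Complex.exp_add, h3, Complex.ofReal_exp]
    congr 2
    ring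
  have hsummable := summable_pdf_shift m σ hσ y
  calc ((∑' n : ℤ, gaussianPDFReal m (Real.toNNReal (σ ^ 2)) (y + (n : ℝ))) : ℂ)
      = ∑' n : ℤ, ((gaussianPDFReal m (Real.toNNReal (σ ^ 2)) (y + (n : ℝ)) : ℝ) : ℂ) := by
        exact_mod_cast Complex.ofReal_tsum _
    _ = ∑' n : ℤ, ((√A)⁻¹ : ℂ) * Complex.exp (-(π:ℂ) / (A : ℂ) *
          ((n : ℂ) + Complex.I * (-Complex.I * ((y:ℂ) - m))) ^ 2) := by
        exact tsum_congr fun n => (hterm n).symm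
    _ = ((√A)⁻¹ : ℂ) * ∑' n : ℤ, Complex.exp (-(π:ℂ) / (A : ℂ) *
          ((n : ℂ) + Complex.I * (-Complex.I * ((y:ℂ) - m))) ^ 2) := tsum_mul_left
    _ = (1 : ℂ) / (A : ℂ) ^ (1/2 : ℂ) * ∑' n : ℤ, Complex.exp (-(π:ℂ) / (A : ℂ) *
          ((n : ℂ) + Complex.I * (-Complex.I * ((y:ℂ) - m))) ^ 2) := by rw [← hsq]
    _ = ∑' k : ℤ, Complex.exp (-(π:ℂ) * (A:ℂ) * (k:ℂ) ^ 2 +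
          2 * (π:ℂ) * (-Complex.I * ((y : ℂ) - (m : ℂ))) * (k:ℂ)) := key.symm
    _ = _ := tsum_congr hterm2

lemma measure_fract_decomp {a b : ℝ} (ha : 0 ≤ a) (hab : a ≤ b) (hb : b ≤ 1)
    (μ : Measure ℝ) (hμ : μ ≪ volume) :
    μ {x : ℝ | Int.fract x ∈ Set.Icc a b}
      = ∑' n : ℤ, μ (Set.Ico ((n : ℝ) + a) ((n : ℝ) + b)) := by
  set S := {x : ℝ | Int.fract x ∈ Set.Icc a b} with hS
  set T := ⋃ n : ℤ, Set.Ico ((n : ℝ) + a) ((n : ℝ) + b) with hT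
  have hTS : T ⊆ S := by
    intro x hx
    obtain ⟨n, hn⟩ := Set.mem_iUnion.1 hx
    obtain ⟨h1, h2⟩ := hn
    have hfl : ⌊x⌋ = n := by
      rw [Int.floor_eq_iff]
      constructor
      · linarith
      · push_cast; nlinarith
    have hfr : Int.fract x = x - n := by
      rw [Int.fract, hfl]
    constructor <;> rw [hfr] <;> linarith
  have hST : S \ T ⊆ Set.range (fun n : ℤ => (n : ℝ) + b) := by
    intro x hx
    obtain ⟨hxS, hxT⟩ := hx
    obtain ⟨h1, h2⟩ := hxS
    rcases eq_or_lt_of_le h2 with heq | hlt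
    · refine ⟨⌊x⌋, ?_⟩
      rw [← heq, Int.fract]
      ring
    · exfalso
      apply hxT
      rw [Int.fract] at h1 hlt
      refine Set.mem_iUnion.2 ⟨⌊x⌋, ?_, ?_⟩
      · linarith
      · linarith
  have hnull : μ (S \ T) = 0 := by
    refine measure_mono_null hST (hμ ?_)
    exact Set.Countable.measure_zero (Set.countable_range _) _
  have hsub : S ⊆ T ∪ (S \ T) := fun x hx =>
    (em (x ∈ T)).elim Or.inl (fun h => Or.inr ⟨hx, h⟩)
  have hμST : μ S = μ T := by
    refine le_antisymm ?_ (measure_mono hTS)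
    calc μ S ≤ μ (T ∪ (S \ T)) := measure_mono hsub
      _ ≤ μ T + μ (S \ T) := measure_union_le _ _
      _ = μ T := by rw [hnull, add_zero]
  have hdisj : Pairwise (Function.onFun Disjoint
      fun n : ℤ => Set.Ico ((n : ℝ) + a) ((n : ℝ) + b)) := by
    intro i j hij
    rw [Function.onFun, Set.disjoint_left]
    rintro x ⟨hi1, hi2⟩ ⟨hj1, hj2⟩
    apply hij
    have h1 : ⌊x - a⌋ = i := Int.floor_eq_iff.2 ⟨by linarith, by push_cast; linarith⟩
    have h2 : ⌊x - a⌋ = j := Int.floor_eq_iff.2 ⟨by linarith, by push_cast; linarith⟩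
    rw [← h1, h2]
  rw [hμST, hT]
  exact measure_iUnion hdisj (fun n => measurableSet_Ico)

lemma norm_fourier_mode (m y : ℝ) (k : ℤ) :
    ‖Complex.exp (-(2 * π * Complex.I * ((y : ℂ) - (m : ℂ))) * (k : ℂ))‖ = 1 := by
  have h : -(2 * ↑π * Complex.I * ((y:ℂ) - (m:ℂ))) * (k : ℂ)
      = ((-(2 * π * (y - m) * (k:ℝ)) : ℝ) : ℂ) * Complex.I := by push_cast; ring
  rw [h]
  exact Complex.norm_exp_ofReal_mul_I _

lemma summable_coeff (σ : ℝ) (hσ : 0 < σ) :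
    Summable fun k : ℤ => rexp (-2 * π ^ 2 * σ ^ 2 * (k : ℝ) ^ 2) := by
  have := summable_gauss_int (2 * π ^ 2 * σ ^ 2) (by positivity)
  refine this.congr fun k => ?_
  ring_nf

lemma pointwise_bound (m σ : ℝ) (hσ : 0 < σ) (y : ℝ) :
    (∑' n : ℤ, gaussianPDFReal m (Real.toNNReal (σ ^ 2)) (y + (n : ℝ)))
      ≤ ∑' k : ℤ, rexp (-2 * π ^ 2 * σ ^ 2 * (k : ℝ) ^ 2) := by
  have hsc := summable_coeff σ hσ
  have hnorm : ∀ k : ℤ, ‖(rexp (-2 * π ^ 2 * σ ^ 2 * (k : ℝ) ^ 2) : ℂ) *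
      Complex.exp (-(2 * π * Complex.I * ((y : ℂ) - (m : ℂ))) * (k : ℂ))‖
      = rexp (-2 * π ^ 2 * σ ^ 2 * (k : ℝ) ^ 2) := by
    intro k
    rw [norm_mul, norm_fourier_mode, mul_one, Complex.norm_real,
      Real.norm_eq_abs, abs_of_pos (Real.exp_pos _)]
  calc (∑' n : ℤ, gaussianPDFReal m (Real.toNNReal (σ ^ 2)) (y + (n : ℝ)))
      ≤ |(∑' n : ℤ, gaussianPDFReal m (Real.toNNReal (σ ^ 2)) (y + (n : ℝ)))| := le_abs_self _
    _ = ‖((∑' n : ℤ, gaussianPDFReal m (Real.toNNReal (σ ^ 2)) (y + (n : ℝ)) : ℝ) : ℂ)‖ := by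
        rw [Complex.norm_real, Real.norm_eq_abs]
    _ = ‖∑' k : ℤ, (rexp (-2 * π ^ 2 * σ ^ 2 * (k : ℝ) ^ 2) : ℂ) *
          Complex.exp (-(2 * π * Complex.I * ((y : ℂ) - (m : ℂ))) * (k : ℂ))‖ := by
        rw [Complex.ofReal_tsum, gaussian_poisson m σ hσ y]
    _ ≤ ∑' k : ℤ, ‖(rexp (-2 * π ^ 2 * σ ^ 2 * (k : ℝ) ^ 2) : ℂ) *
          Complex.exp (-(2 * π * Complex.I * ((y : ℂ) - (m : ℂ))) * (k : ℂ))‖ := by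
        refine norm_tsum_le_tsum_norm ?_
        refine hsc.congr fun k => (hnorm k).symm
    _ = ∑' k : ℤ, rexp (-2 * π ^ 2 * σ ^ 2 * (k : ℝ) ^ 2) := tsum_congr hnorm

lemma gaussian_key_repr (a b : ℝ) (ha : 0 ≤ a) (hab : a ≤ b) (hb : b ≤ 1)
    (m σ : ℝ) (hσ : 0 < σ) :
    (((gaussianReal m (Real.toNNReal (σ ^ 2)))
        {x : ℝ | Int.fract x ∈ Set.Icc a b}).toReal : ℂ)
      = ∑' k : ℤ, (rexp (-2 * π ^ 2 * σ ^ 2 * (k : ℝ) ^ 2) : ℂ) *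
          ∫ y in Set.Ioc a b, Complex.exp (-(2 * π * Complex.I * ((y : ℂ) - (m : ℂ))) * (k : ℂ)) := by
  have hπ := Real.pi_pos
  have hv0 : Real.toNNReal (σ ^ 2) ≠ 0 := by
    simp only [ne_eq, Real.toNNReal_eq_zero, not_le]
    positivity
  set μ := gaussianReal m (Real.toNNReal (σ ^ 2)) with hμdef
  set p := gaussianPDFReal m (Real.toNNReal (σ ^ 2)) with hpdef
  have hsc := summable_coeff σ hσ
  have hM : 0 ≤ ∑' k : ℤ, rexp (-2 * π ^ 2 * σ ^ 2 * (k : ℝ) ^ 2) :=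
    tsum_nonneg fun k => (Real.exp_pos _).le
  -- step 2 : measure of each interval as integral over Ioc a b
  have step2 : ∀ n : ℤ, (μ (Set.Ico ((n : ℝ) + a) ((n : ℝ) + b))).toReal
      = ∫ y in Set.Ioc a b, p (y + (n : ℝ)) := by
    intro n
    rw [hμdef, gaussianReal_apply_eq_integral m hv0,
      ENNReal.toReal_ofReal (setIntegral_nonneg measurableSet_Ico
        fun x _ => gaussianPDFReal_nonneg _ _ _)]
    rw [← MeasureTheory.integral_Icc_eq_integral_Ico, MeasureTheory.integral_Icc_eq_integral_Ioc]
    rw [← intervalIntegral.integral_of_le (by linarith : (n : ℝ) + a ≤ (n : ℝ) + b)]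
    have := intervalIntegral.integral_comp_add_right (a := a) (b := b) (fun x => p x) (n : ℝ)
    rw [add_comm a (n:ℝ), add_comm b (n:ℝ)] at this
    rw [← this, intervalIntegral.integral_of_le hab]
  -- step 1+3 : total measure as sum of interval integrals
  have step13 : (μ {x : ℝ | Int.fract x ∈ Set.Icc a b}).toReal
      = ∑' n : ℤ, ∫ y in Set.Ioc a b, p (y + (n : ℝ)) := by
    rw [measure_fract_decomp ha hab hb μ (gaussianReal_absolutelyContinuous m hv0),
      ENNReal.tsum_toReal_eq (fun n => measure_ne_top _ _)]
    exact tsum_congr step2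
  -- step 4 : swap sum and integral
  have hmeas : ∀ n : ℤ, AEStronglyMeasurable (fun y : ℝ => p (y + (n : ℝ)))
      (volume.restrict (Set.Ioc a b)) := fun n =>
    ((measurable_gaussianPDFReal _ _).comp (measurable_add_const _)).aestronglyMeasurable
  have hfin : ∑' n : ℤ, ∫⁻ y in Set.Ioc a b, ‖p (y + (n : ℝ))‖₊ ∂volume ≠ ⊤ := by
    have hswap := lintegral_tsum (μ := volume.restrict (Set.Ioc a b))
      (f := fun (n : ℤ) (y : ℝ) => (‖p (y + (n : ℝ))‖₊ : ℝ≥0∞))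
      (fun n => Measurable.aemeasurable (by
        exact ((measurable_gaussianPDFReal _ _).comp (measurable_add_const _)).enorm))
    rw [← hswap]
    refine ne_of_lt ?_
    have hpt : ∀ y : ℝ, (∑' n : ℤ, (‖p (y + (n : ℝ))‖₊ : ℝ≥0∞))
        = ENNReal.ofReal (∑' n : ℤ, p (y + (n : ℝ))) := by
      intro y
      rw [ENNReal.ofReal_tsum_of_nonneg (fun n => gaussianPDFReal_nonneg _ _ _)
        (summable_pdf_shift m σ hσ y)]
      exact tsum_congr fun n => Real.enorm_eq_ofReal (gaussianPDFReal_nonneg _ _ _)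
    calc ∫⁻ y in Set.Ioc a b, ∑' n : ℤ, (‖p (y + (n : ℝ))‖₊ : ℝ≥0∞) ∂volume
        ≤ ∫⁻ _ in Set.Ioc a b,
            ENNReal.ofReal (∑' k : ℤ, rexp (-2 * π ^ 2 * σ ^ 2 * (k : ℝ) ^ 2)) ∂volume := by
          refine lintegral_mono fun y => ?_
          rw [hpt y]
          exact ENNReal.ofReal_le_ofReal (pointwise_bound m σ hσ y)
      _ = ENNReal.ofReal (∑' k : ℤ, rexp (-2 * π ^ 2 * σ ^ 2 * (k : ℝ) ^ 2))
            * volume (Set.Ioc a b) := by rw [MeasureTheory.setLIntegral_const]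
      _ < ⊤ := ENNReal.mul_lt_top ENNReal.ofReal_lt_top (by simp [Real.volume_Ioc])
  have step4 : ∑' n : ℤ, ∫ y in Set.Ioc a b, p (y + (n : ℝ))
      = ∫ y in Set.Ioc a b, ∑' n : ℤ, p (y + (n : ℝ)) :=
    (MeasureTheory.integral_tsum hmeas hfin).symm
  -- step 5 : Poisson summation under the integral, with complex coercion
  have step5 : ((∫ y in Set.Ioc a b, ∑' n : ℤ, p (y + (n : ℝ)) : ℝ) : ℂ)
      = ∫ y in Set.Ioc a b, ∑' k : ℤ, (rexp (-2 * π ^ 2 * σ ^ 2 * (k : ℝ) ^ 2) : ℂ) *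
          Complex.exp (-(2 * π * Complex.I * ((y : ℂ) - (m : ℂ))) * (k : ℂ)) := by
    rw [show (((∫ y in Set.Ioc a b, ∑' n : ℤ, p (y + (n : ℝ)) : ℝ)) : ℂ)
        = ∫ y in Set.Ioc a b, ((∑' n : ℤ, p (y + (n : ℝ)) : ℝ) : ℂ) from
      (integral_ofReal (𝕜 := ℂ)).symm]
    refine integral_congr_ae (Filter.Eventually.of_forall fun y => ?_)
    have := gaussian_poisson m σ hσ y
    rw [← Complex.ofReal_tsum] at this
    exact this
  -- step 6 : swap sum and integral in ℂ
  have hmeas2 : ∀ k : ℤ, AEStronglyMeasurable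
      (fun y : ℝ => (rexp (-2 * π ^ 2 * σ ^ 2 * (k : ℝ) ^ 2) : ℂ) *
        Complex.exp (-(2 * π * Complex.I * ((y : ℂ) - (m : ℂ))) * (k : ℂ)))
      (volume.restrict (Set.Ioc a b)) := by
    intro k
    refine Continuous.aestronglyMeasurable ?_
    continuity
  have hfin2 : ∑' k : ℤ, ∫⁻ y in Set.Ioc a b,
      ‖(rexp (-2 * π ^ 2 * σ ^ 2 * (k : ℝ) ^ 2) : ℂ) *
        Complex.exp (-(2 * π * Complex.I * ((y : ℂ) - (m : ℂ))) * (k : ℂ))‖₊ ∂volume ≠ ⊤ := by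
    refine ne_of_lt ?_
    have hnn : ∀ k : ℤ, ∀ y : ℝ, (‖(rexp (-2 * π ^ 2 * σ ^ 2 * (k : ℝ) ^ 2) : ℂ) *
        Complex.exp (-(2 * π * Complex.I * ((y : ℂ) - (m : ℂ))) * (k : ℂ))‖₊ : ℝ≥0∞)
        = ENNReal.ofReal (rexp (-2 * π ^ 2 * σ ^ 2 * (k : ℝ) ^ 2)) := by
      intro k y
      rw [← Real.enorm_eq_ofReal (Real.exp_pos _).le]
      congr 1
      ext
      rw [coe_nnnorm, coe_nnnorm, norm_mul, norm_fourier_mode, mul_one, Complex.norm_real]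
    calc ∑' k : ℤ, ∫⁻ y in Set.Ioc a b,
          ‖(rexp (-2 * π ^ 2 * σ ^ 2 * (k : ℝ) ^ 2) : ℂ) *
            Complex.exp (-(2 * π * Complex.I * ((y : ℂ) - (m : ℂ))) * (k : ℂ))‖₊ ∂volume
        = ∑' k : ℤ, ENNReal.ofReal (rexp (-2 * π ^ 2 * σ ^ 2 * (k : ℝ) ^ 2))
            * volume (Set.Ioc a b) := by
          refine tsum_congr fun k => ?_
          rw [← MeasureTheory.setLIntegral_const]
          exact lintegral_congr fun y => hnn k y
      _ = (∑' k : ℤ, ENNReal.ofReal (rexp (-2 * π ^ 2 * σ ^ 2 * (k : ℝ) ^ 2)))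
            * volume (Set.Ioc a b) := ENNReal.tsum_mul_right
      _ = ENNReal.ofReal (∑' k : ℤ, rexp (-2 * π ^ 2 * σ ^ 2 * (k : ℝ) ^ 2))
            * volume (Set.Ioc a b) := by
          rw [ENNReal.ofReal_tsum_of_nonneg (fun k => (Real.exp_pos _).le) hsc]
      _ < ⊤ := ENNReal.mul_lt_top ENNReal.ofReal_lt_top (by simp [Real.volume_Ioc])
  have step6 : (∫ y in Set.Ioc a b, ∑' k : ℤ,
        (rexp (-2 * π ^ 2 * σ ^ 2 * (k : ℝ) ^ 2) : ℂ) *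
          Complex.exp (-(2 * π * Complex.I * ((y : ℂ) - (m : ℂ))) * (k : ℂ)))
      = ∑' k : ℤ, ∫ y in Set.Ioc a b,
        (rexp (-2 * π ^ 2 * σ ^ 2 * (k : ℝ) ^ 2) : ℂ) *
          Complex.exp (-(2 * π * Complex.I * ((y : ℂ) - (m : ℂ))) * (k : ℂ)) :=
    MeasureTheory.integral_tsum hmeas2 hfin2
  rw [step13, step4]
  rw [step5, step6]
  exact tsum_congr fun k => integral_const_mul _ _

lemma integral_mode_zero {a b : ℝ} (hab : a ≤ b) (m : ℝ) :
    (∫ y in Set.Ioc a b,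
        Complex.exp (-(2 * π * Complex.I * ((y : ℂ) - (m : ℂ))) * ((0 : ℤ) : ℂ)))
      = ((b - a : ℝ) : ℂ) := by
  have h : ∀ y : ℝ, Complex.exp (-(2 * π * Complex.I * ((y : ℂ) - (m : ℂ))) * ((0 : ℤ) : ℂ))
      = 1 := by
    intro y
    simp
  rw [setIntegral_congr_fun measurableSet_Ioc (fun y _ => h y)]
  simp [Real.volume_Ioc, ENNReal.toReal_ofReal (sub_nonneg.2 hab), hab]

lemma norm_integral_mode {a b : ℝ} (hab : a ≤ b) (m : ℝ) {k : ℤ} (hk : k ≠ 0) :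
    ‖∫ y in Set.Ioc a b,
        Complex.exp (-(2 * π * Complex.I * ((y : ℂ) - (m : ℂ))) * (k : ℂ))‖
      = ‖Complex.exp (2 * π * Complex.I * b * (k : ℂ)) -
            Complex.exp (2 * π * Complex.I * a * (k : ℂ))‖ / (2 * π * |(k : ℝ)|) := by
  have hπ := Real.pi_pos
  set c : ℂ := -(2 * π * Complex.I) * (k : ℂ) with hc
  have hkc : (k : ℂ) ≠ 0 := Int.cast_ne_zero.2 hk
  have hc0 : c ≠ 0 := by
    rw [hc]
    apply mul_ne_zero _ hkc
    simp [Complex.ext_iff, Real.pi_ne_zero]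
  have hint : ∀ y : ℝ, Complex.exp (-(2 * π * Complex.I * ((y : ℂ) - (m : ℂ))) * (k : ℂ))
      = Complex.exp (2 * π * Complex.I * m * (k : ℂ)) * Complex.exp (c * (y : ℂ)) := by
    intro y
    rw [← Complex.exp_add]
    congr 1
    rw [hc]
    ring
  rw [setIntegral_congr_fun measurableSet_Ioc (fun y _ => hint y),
    ← intervalIntegral.integral_of_le hab, intervalIntegral.integral_const_mul,
    integral_exp_mul_complex hc0]
  rw [norm_mul, norm_div]
  have h1 : ‖Complex.exp (2 * π * Complex.I * m * (k : ℂ))‖ = 1 := by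
    have : (2 * (π:ℂ) * Complex.I * m * (k : ℂ)) = ((2 * π * m * k : ℝ) : ℂ) * Complex.I := by
      push_cast; ring
    rw [this, Complex.norm_exp_ofReal_mul_I]
  have h2 : ‖c‖ = 2 * π * |(k : ℝ)| := by
    rw [hc, norm_mul]
    have e1 : ‖-(2 * (π:ℂ) * Complex.I)‖ = 2 * π := by
      simp [norm_mul, abs_of_pos hπ]
    rw [e1, Complex.norm_intCast]
  have h3 : ‖Complex.exp (c * (b : ℂ)) - Complex.exp (c * (a : ℂ))‖
      = ‖Complex.exp (2 * π * Complex.I * b * (k : ℂ)) -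
          Complex.exp (2 * π * Complex.I * a * (k : ℂ))‖ := by
    have hconj : (starRingEnd ℂ) (Complex.exp (c * (b : ℂ)) - Complex.exp (c * (a : ℂ)))
        = Complex.exp (2 * π * Complex.I * b * (k : ℂ)) -
            Complex.exp (2 * π * Complex.I * a * (k : ℂ)) := by
      rw [map_sub, ← Complex.exp_conj, ← Complex.exp_conj]
      congr 1 <;>
      · rw [hc]
        simp only [map_mul, map_neg, Complex.conj_I, Complex.conj_ofReal, map_ofNat,
          map_intCast]
        push_cast
        ring
    rw [← hconj, RCLike.norm_conj]
  rw [h1, one_mul, h2, h3]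

lemma part_one (a b : ℝ) (ha : 0 ≤ a) (hab : a ≤ b) (hb : b ≤ 1) (m σ : ℝ) (hσ : 0 < σ) :
    |((gaussianReal m (Real.toNNReal (σ ^ 2))) {x : ℝ | Int.fract x ∈ Set.Icc a b}).toReal
        - (b - a)| ≤
      ∑' k : {k : ℤ // k ≠ 0},
        Real.exp (-2 * π ^ 2 * σ ^ 2 * ((k : ℤ) : ℝ) ^ 2) *
          ‖Complex.exp (2 * π * Complex.I * b * ((k : ℤ) : ℂ)) -
            Complex.exp (2 * π * Complex.I * a * ((k : ℤ) : ℂ))‖ /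
          (2 * π * |((k : ℤ) : ℝ)|) := by
  have hπ := Real.pi_pos
  set c : ℤ → ℝ := fun k => rexp (-2 * π ^ 2 * σ ^ 2 * (k : ℝ) ^ 2) with hcdef
  set Ii : ℤ → ℂ := fun k => ∫ y in Set.Ioc a b,
      Complex.exp (-(2 * π * Complex.I * ((y : ℂ) - (m : ℂ))) * (k : ℂ)) with hIdef
  set Sf : ℤ → ℂ := fun k => ((c k : ℝ) : ℂ) * Ii k with hSdef
  have hsc := summable_coeff σ hσ
  have hIbound : ∀ k : ℤ, ‖Ii k‖ ≤ b - a := by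
    intro k
    have := MeasureTheory.norm_setIntegral_le_of_norm_le_const (C := 1)
      (by simp [Real.volume_Ioc] : volume (Set.Ioc a b) < ⊤)
      (fun y (_ : y ∈ Set.Ioc a b) => le_of_eq (norm_fourier_mode m y k))
    calc ‖Ii k‖ ≤ 1 * (volume (Set.Ioc a b)).toReal := this
      _ = b - a := by simp [Real.volume_Ioc, ENNReal.toReal_ofReal (sub_nonneg.2 hab), hab]
  have hSnorm : ∀ k : ℤ, ‖Sf k‖ = c k * ‖Ii k‖ := by
    intro k
    rw [hSdef]
    simp only [norm_mul, Complex.norm_real, Real.norm_eq_abs,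
      abs_of_pos (Real.exp_pos _)]
    rw [abs_of_pos (show 0 < c k from Real.exp_pos _)]
  have hnormsum : Summable fun k : ℤ => ‖Sf k‖ := by
    refine Summable.of_nonneg_of_le (fun k => norm_nonneg _) (fun k => ?_)
      (hsc.mul_right (b - a))
    rw [hSnorm k]
    exact mul_le_mul_of_nonneg_left (hIbound k) (Real.exp_pos _).le
  have hSsum : Summable Sf := hnormsum.of_norm
  have hkey : ((((gaussianReal m (Real.toNNReal (σ ^ 2)))
      {x : ℝ | Int.fract x ∈ Set.Icc a b}).toReal : ℝ) : ℂ) = ∑' k : ℤ, Sf k :=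
    gaussian_key_repr a b ha hab hb m σ hσ
  have e : {k : ℤ // k ≠ 0} ≃ ↥(({0} : Set ℤ)ᶜ) :=
    Equiv.subtypeEquivRight (by intro k; simp)
  have hsplit : ∑' k : ℤ, Sf k = Sf 0 + ∑' k : {k : ℤ // k ≠ 0}, Sf ↑k := by
    calc ∑' k : ℤ, Sf k
        = (∑' x : ↥(({0} : Set ℤ)), Sf ↑x) + ∑' x : ↥(({0} : Set ℤ)ᶜ), Sf ↑x :=
          (Summable.tsum_subtype_add_tsum_subtype_compl hSsum {0}).symm
      _ = Sf 0 + ∑' k : {k : ℤ // k ≠ 0}, Sf ↑k := by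
          rw [tsum_singleton]
          congr 1
  have hSf0 : Sf 0 = ((b - a : ℝ) : ℂ) := by
    have hI0 : Ii 0 = ((b - a : ℝ) : ℂ) := integral_mode_zero hab m
    have hc0 : c 0 = 1 := by simp [hcdef]
    show ((c 0 : ℝ) : ℂ) * Ii 0 = ((b - a : ℝ) : ℂ)
    rw [hI0, hc0]
    norm_num
  have hdiff : ((((gaussianReal m (Real.toNNReal (σ ^ 2)))
        {x : ℝ | Int.fract x ∈ Set.Icc a b}).toReal - (b - a) : ℝ) : ℂ)
      = ∑' k : {k : ℤ // k ≠ 0}, Sf ↑k := by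
    rw [Complex.ofReal_sub, hkey, hsplit, hSf0]
    ring
  have hsubsum : Summable fun k : {k : ℤ // k ≠ 0} => ‖Sf ↑k‖ := by
    exact hnormsum.subtype {k : ℤ | k ≠ 0}
  calc |((gaussianReal m (Real.toNNReal (σ ^ 2)))
        {x : ℝ | Int.fract x ∈ Set.Icc a b}).toReal - (b - a)|
      = ‖((((gaussianReal m (Real.toNNReal (σ ^ 2)))
          {x : ℝ | Int.fract x ∈ Set.Icc a b}).toReal - (b - a) : ℝ) : ℂ)‖ := by
        rw [Complex.norm_real, Real.norm_eq_abs]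
    _ = ‖∑' k : {k : ℤ // k ≠ 0}, Sf ↑k‖ := by rw [hdiff]
    _ ≤ ∑' k : {k : ℤ // k ≠ 0}, ‖Sf ↑k‖ := norm_tsum_le_tsum_norm hsubsum
    _ = _ := by
        refine tsum_congr fun k => ?_
        obtain ⟨k, hk⟩ := k
        rw [hSnorm k, norm_integral_mode hab m hk, mul_div_assoc]


lemma one_le_abs_cast {k : ℤ} (hk : k ≠ 0) : (1 : ℝ) ≤ |((k : ℤ) : ℝ)| := by
  have := Int.one_le_abs hk
  calc (1:ℝ) ≤ ((|k| : ℤ) : ℝ) := by exact_mod_cast this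
    _ = |((k : ℤ) : ℝ)| := by push_cast; rfl

/-- For a Gaussian random variable `X` with mean `m` and variance `σ²`, and any
`[a,b] ⊆ [0,1]`:
`|P(X mod 1 ∈ [a,b]) - (b-a)| ≤ ∑_{k ≠ 0} e^{-2π²σ²k²} |e^{2πibk} - e^{2πiak}|/(2π|k|)`;
in particular `P(X mod 1 ∈ [a,b]) → b - a` as `σ → ∞`, uniformly in the mean `m`. -/
theorem gaussian_mod_one_error_bound (a b : ℝ) (ha : 0 ≤ a) (hab : a ≤ b) (hb : b ≤ 1) :
    (∀ (m σ : ℝ), 0 < σ →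
      |((gaussianReal m (Real.toNNReal (σ ^ 2))) {x : ℝ | Int.fract x ∈ Set.Icc a b}).toReal
          - (b - a)| ≤
        ∑' k : {k : ℤ // k ≠ 0},
          Real.exp (-2 * π ^ 2 * σ ^ 2 * ((k : ℤ) : ℝ) ^ 2) *
            ‖Complex.exp (2 * π * Complex.I * b * ((k : ℤ) : ℂ)) -
              Complex.exp (2 * π * Complex.I * a * ((k : ℤ) : ℂ))‖ /
            (2 * π * |((k : ℤ) : ℝ)|)) ∧
    (∀ ε : ℝ, 0 < ε → ∃ σ₀ : ℝ, ∀ σ : ℝ, σ₀ ≤ σ → 0 < σ → ∀ m : ℝ,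
      |((gaussianReal m (Real.toNNReal (σ ^ 2))) {x : ℝ | Int.fract x ∈ Set.Icc a b}).toReal
          - (b - a)| ≤ ε) := by
  have hπ := Real.pi_pos
  have hπ1 : (1 : ℝ) ≤ π := by linarith [Real.pi_gt_three]
  refine ⟨fun m σ hσ => part_one a b ha hab hb m σ hσ, ?_⟩
  intro ε hε
  have hs1 : Summable fun k : ℤ => rexp (-((k : ℝ) ^ 2)) := by
    refine (summable_gauss_int 1 one_pos).congr fun k => ?_
    norm_num
  set C : ℝ := ∑' k : ℤ, rexp (-((k : ℝ) ^ 2)) with hCdef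
  have hC0 : 0 ≤ C := tsum_nonneg fun k => (Real.exp_pos _).le
  set K : ℝ := rexp 1 * C / π with hKdef
  have hK0 : 0 ≤ K := by positivity
  refine ⟨max 1 (K / ε + 1), fun σ hσ0 hσpos m => ?_⟩
  have hσ1 : (1 : ℝ) ≤ σ := le_trans (le_max_left _ _) hσ0
  have hσK : K / ε ≤ σ := by
    have := le_trans (le_max_right _ _) hσ0
    linarith
  have hsc := summable_coeff σ hσpos
  -- termwise bound on the series
  have hterm : ∀ k : {k : ℤ // k ≠ 0},
      Real.exp (-2 * π ^ 2 * σ ^ 2 * ((k : ℤ) : ℝ) ^ 2) *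
        ‖Complex.exp (2 * π * Complex.I * b * ((k : ℤ) : ℂ)) -
          Complex.exp (2 * π * Complex.I * a * ((k : ℤ) : ℂ))‖ /
        (2 * π * |((k : ℤ) : ℝ)|)
      ≤ (rexp 1 * rexp (-(σ ^ 2)) * (1 / π)) * rexp (-(((k : ℤ) : ℝ) ^ 2)) := by
    rintro ⟨k, hk⟩
    have hk1 : (1 : ℝ) ≤ |(k : ℝ)| := one_le_abs_cast hk
    have hk2 : (1 : ℝ) ≤ (k : ℝ) ^ 2 := by nlinarith [abs_nonneg ((k:ℝ)), sq_abs ((k:ℝ))]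
    have hw : ‖Complex.exp (2 * π * Complex.I * b * ((k : ℤ) : ℂ)) -
        Complex.exp (2 * π * Complex.I * a * ((k : ℤ) : ℂ))‖ ≤ 2 := by
      refine le_trans (norm_sub_le _ _) ?_
      have e1 : (2 * (π:ℂ) * Complex.I * b * (k : ℂ)) = ((2 * π * b * k : ℝ) : ℂ) * Complex.I := by
        push_cast; ring
      have e2 : (2 * (π:ℂ) * Complex.I * a * (k : ℂ)) = ((2 * π * a * k : ℝ) : ℂ) * Complex.I := by
        push_cast; ring
      rw [e1, e2, Complex.norm_exp_ofReal_mul_I, Complex.norm_exp_ofReal_mul_I]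
      norm_num
    have hexp : rexp (-2 * π ^ 2 * σ ^ 2 * ((k : ℤ) : ℝ) ^ 2)
        ≤ rexp 1 * rexp (-(σ ^ 2)) * rexp (-(((k : ℤ) : ℝ) ^ 2)) := by
      rw [← Real.exp_add, ← Real.exp_add]
      apply Real.exp_le_exp.2
      have hσ2 : (1:ℝ) ≤ σ ^ 2 := by nlinarith
      have h2π : (1:ℝ) ≤ 2 * π ^ 2 := by nlinarith
      nlinarith [mul_nonneg (sub_nonneg.2 hσ2) (sub_nonneg.2 hk2),
        mul_nonneg (mul_nonneg (sq_nonneg σ) (sq_nonneg ((k:ℝ)))) (sub_nonneg.2 h2π)]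
    calc rexp (-2 * π ^ 2 * σ ^ 2 * ((k : ℤ) : ℝ) ^ 2) *
          ‖Complex.exp (2 * π * Complex.I * b * ((k : ℤ) : ℂ)) -
            Complex.exp (2 * π * Complex.I * a * ((k : ℤ) : ℂ))‖ /
          (2 * π * |((k : ℤ) : ℝ)|)
        ≤ rexp (-2 * π ^ 2 * σ ^ 2 * ((k : ℤ) : ℝ) ^ 2) * 2 / (2 * π) := by
          apply div_le_div₀ (by positivity)
            (mul_le_mul_of_nonneg_left hw (Real.exp_pos _).le) (by positivity)
          nlinarith
      _ = rexp (-2 * π ^ 2 * σ ^ 2 * ((k : ℤ) : ℝ) ^ 2) * (1 / π) := by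
          field_simp
      _ ≤ rexp 1 * rexp (-(σ ^ 2)) * rexp (-(((k : ℤ) : ℝ) ^ 2)) * (1 / π) := by
          apply mul_le_mul_of_nonneg_right hexp (by positivity)
      _ = (rexp 1 * rexp (-(σ ^ 2)) * (1 / π)) * rexp (-(((k : ℤ) : ℝ) ^ 2)) := by ring
  -- summabilities
  have hsRHS : Summable fun k : {k : ℤ // k ≠ 0} =>
      (rexp 1 * rexp (-(σ ^ 2)) * (1 / π)) * rexp (-(((k : ℤ) : ℝ) ^ 2)) :=
    ((hs1.mul_left _).subtype _)
  have hsLHS : Summable fun k : {k : ℤ // k ≠ 0} =>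
      Real.exp (-2 * π ^ 2 * σ ^ 2 * ((k : ℤ) : ℝ) ^ 2) *
        ‖Complex.exp (2 * π * Complex.I * b * ((k : ℤ) : ℂ)) -
          Complex.exp (2 * π * Complex.I * a * ((k : ℤ) : ℂ))‖ /
        (2 * π * |((k : ℤ) : ℝ)|) := by
    refine Summable.of_nonneg_of_le (fun k => ?_) (fun k => le_trans (hterm k) ?_)
      hsRHS
    · have : (0:ℝ) < 2 * π * |((k : ℤ) : ℝ)| := by
        have := one_le_abs_cast k.2
        nlinarith
      positivity
    · exact le_refl _
  -- put it together
  have hsum_le : (∑' k : {k : ℤ // k ≠ 0},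
      Real.exp (-2 * π ^ 2 * σ ^ 2 * ((k : ℤ) : ℝ) ^ 2) *
        ‖Complex.exp (2 * π * Complex.I * b * ((k : ℤ) : ℂ)) -
          Complex.exp (2 * π * Complex.I * a * ((k : ℤ) : ℂ))‖ /
        (2 * π * |((k : ℤ) : ℝ)|))
      ≤ (rexp 1 * rexp (-(σ ^ 2)) * (1 / π)) * C := by
    calc _ ≤ ∑' k : {k : ℤ // k ≠ 0},
          (rexp 1 * rexp (-(σ ^ 2)) * (1 / π)) * rexp (-(((k : ℤ) : ℝ) ^ 2)) :=
        Summable.tsum_le_tsum hterm hsLHS hsRHS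
      _ = (rexp 1 * rexp (-(σ ^ 2)) * (1 / π)) *
          ∑' k : {k : ℤ // k ≠ 0}, rexp (-(((k : ℤ) : ℝ) ^ 2)) := tsum_mul_left
      _ ≤ (rexp 1 * rexp (-(σ ^ 2)) * (1 / π)) * C := by
        refine mul_le_mul_of_nonneg_left ?_ (by positivity)
        refine Summable.tsum_le_tsum_of_inj (Subtype.val) Subtype.val_injective
          (fun c _ => (Real.exp_pos _).le) (fun k => le_refl _) (hs1.subtype _) hs1
  have hfinal : (rexp 1 * rexp (-(σ ^ 2)) * (1 / π)) * C ≤ ε := by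
    have hexpσ : rexp (-(σ ^ 2)) ≤ 1 / σ ^ 2 := by
      rw [Real.exp_neg, one_div]
      have h1 : σ ^ 2 ≤ rexp (σ ^ 2) := by linarith [Real.add_one_le_exp (σ ^ 2)]
      exact inv_anti₀ (by positivity) h1
    have hσsq : σ ≤ σ ^ 2 := by nlinarith
    have hKε : K / σ ^ 2 ≤ ε := by
      have h2 : K ≤ ε * σ ^ 2 := by
        have h3 := le_trans hσK hσsq
        calc K = (K / ε) * ε := by field_simp
          _ ≤ σ ^ 2 * ε := by nlinarith
          _ = ε * σ ^ 2 := by ring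
      rw [div_le_iff₀ (by positivity)]
      linarith
    calc (rexp 1 * rexp (-(σ ^ 2)) * (1 / π)) * C
        ≤ (rexp 1 * (1 / σ ^ 2) * (1 / π)) * C := by
          have := (Real.exp_pos 1).le
          have h1π : (0:ℝ) ≤ 1 / π := by positivity
          refine mul_le_mul_of_nonneg_right ?_ hC0
          refine mul_le_mul_of_nonneg_right ?_ h1π
          exact mul_le_mul_of_nonneg_left hexpσ this
      _ = K / σ ^ 2 := by rw [hKdef]; ring
      _ ≤ ε := hKε
  exact le_trans (le_trans (part_one a b ha hab hb m σ hσpos) hsum_le) hfinal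
end

section
/- Let S_m be a sum of m i.i.d. geometric(1/2) random variables and let n ≥ 1 be an integer. Then for each j ∈ {0, 1, …, n−1}, P((S_m − 2m)·(1/n) mod 1 = j/n) → 1/n as m → ∞; i.e. the fractional part of (S_m − 2m)/n is asymptotically uniform on {0, 1/n, …, (n−1)/n}. -/
open MeasureTheory ProbabilityTheory Filter

section Aux

variable {Ω : Type*} [MeasurableSpace Ω]

/-- Partition of a probability space by the residue of a natural-valued variable. -/
lemma geom_zmod_partition (μ : Measure Ω) [IsProbabilityMeasure μ]
    (n : ℕ) [NeZero n] (X : Ω → ℕ) (hX : Measurable X) :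
    ∑ s : ZMod n, μ {ω | (((X ω : ℕ) : ZMod n)) = s} = 1 := by
  have hd : ((Finset.univ : Finset (ZMod n)) : Set (ZMod n)).PairwiseDisjoint
      (fun s : ZMod n => ({ω : Ω | (((X ω : ℕ) : ZMod n)) = s} : Set Ω)) := by
    intro s _ t _ hst
    refine Set.disjoint_left.2 fun ω h1 h2 => hst ?_
    simp only [Set.mem_setOf_eq] at h1 h2
    rw [← h1, ← h2]
  have hm : ∀ s ∈ (Finset.univ : Finset (ZMod n)),
      MeasurableSet {ω | (((X ω : ℕ) : ZMod n)) = s} := by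
    intro s _
    exact hX (MeasurableSet.of_discrete (s := {k : ℕ | (k : ZMod n) = s}))
  have hu : (⋃ s ∈ (Finset.univ : Finset (ZMod n)), {ω | (((X ω : ℕ) : ZMod n)) = s})
      = Set.univ := by
    ext ω
    simp only [Set.mem_iUnion, Finset.mem_univ, Set.mem_setOf_eq, Set.mem_univ, iff_true,
      exists_prop, true_and]
    exact ⟨_, rfl⟩
  rw [← measure_biUnion_finset hd hm] at *
  rw [hu, measure_univ]

/-- Lower bound on the probability of each residue class. -/
lemma geom_q_lower (μ : Measure Ω) (ξ : Ω → ℕ)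
    (hdist : ∀ k : ℕ, 1 ≤ k → μ {ω | ξ ω = k} = ENNReal.ofReal ((1 : ℝ) / 2 ^ k))
    (n : ℕ) [NeZero n] (s : ZMod n) :
    ENNReal.ofReal ((1 : ℝ) / 2 ^ n) ≤ μ {ω | (((ξ ω : ℕ) : ZMod n)) = s} := by
  obtain ⟨k₀, hk1, hkn, hks⟩ : ∃ k₀ : ℕ, 1 ≤ k₀ ∧ k₀ ≤ n ∧ ((k₀ : ZMod n)) = s := by
    rcases Nat.eq_zero_or_pos s.val with h0 | hpos
    · refine ⟨n, NeZero.one_le, le_refl n, ?_⟩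
      have h1 : ((s.val : ℕ) : ZMod n) = s := (ZMod.natCast_val s).trans (ZMod.cast_id n s)
      rw [h0] at h1
      rw [ZMod.natCast_self, ← h1]
      simp
    · exact ⟨s.val, hpos, (ZMod.val_lt s).le,
        (ZMod.natCast_val s).trans (ZMod.cast_id n s)⟩
  calc ENNReal.ofReal ((1 : ℝ) / 2 ^ n) ≤ ENNReal.ofReal ((1 : ℝ) / 2 ^ k₀) := by
        apply ENNReal.ofReal_le_ofReal
        apply one_div_le_one_div_of_le (by positivity)
        exact pow_le_pow_right₀ (by norm_num) hkn
    _ = μ {ω | ξ ω = k₀} := (hdist k₀ hk1).symm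
    _ ≤ μ {ω | (((ξ ω : ℕ) : ZMod n)) = s} := by
        apply measure_mono
        intro ω hω
        simp only [Set.mem_setOf_eq] at hω ⊢
        rw [hω, hks]

/-- Convolution recursion for the distribution of partial sums mod `n`. -/
lemma geom_rec_step (μ : Measure Ω) (ξ : ℕ → Ω → ℕ)
    (hmeas : ∀ i, Measurable (ξ i))
    (hindep : ProbabilityTheory.iIndepFun ξ μ)
    (n : ℕ) [NeZero n] (m : ℕ) (r : ZMod n) :
    μ {ω | (((∑ i ∈ Finset.range (m + 1), ξ i ω : ℕ) : ZMod n)) = r}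
      = ∑ s : ZMod n, μ {ω | (((ξ m ω : ℕ) : ZMod n)) = s}
          * μ {ω | (((∑ i ∈ Finset.range m, ξ i ω : ℕ) : ZMod n)) = r - s} := by
  have hind : IndepFun (ξ m) (∑ i ∈ Finset.range m, ξ i) μ :=
    (hindep.indepFun_sum_range_succ hmeas m).symm
  have hsum_apply : ∀ ω, (∑ i ∈ Finset.range m, ξ i) ω = ∑ i ∈ Finset.range m, ξ i ω := by
    intro ω; simp [Finset.sum_apply]
  have hset : {ω | (((∑ i ∈ Finset.range (m + 1), ξ i ω : ℕ) : ZMod n)) = r}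
      = ⋃ s ∈ (Finset.univ : Finset (ZMod n)),
          ({ω | (((ξ m ω : ℕ) : ZMod n)) = s} ∩
            {ω | (((∑ i ∈ Finset.range m, ξ i ω : ℕ) : ZMod n)) = r - s}) := by
    ext ω
    simp only [Set.mem_setOf_eq, Set.mem_iUnion, Set.mem_inter_iff, Finset.mem_univ,
      exists_prop, true_and]
    constructor
    · intro h
      refine ⟨(((ξ m ω : ℕ) : ZMod n)), rfl, ?_⟩
      rw [← h, Finset.sum_range_succ]
      push_cast
      ring
    · rintro ⟨s, hs1, hs2⟩
      rw [Finset.sum_range_succ]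
      push_cast at hs2 ⊢
      rw [hs1, hs2]
      ring
  have hd : ((Finset.univ : Finset (ZMod n)) : Set (ZMod n)).PairwiseDisjoint
      (fun s : ZMod n => ({ω : Ω | (((ξ m ω : ℕ) : ZMod n)) = s} : Set Ω) ∩
        {ω : Ω | (((∑ i ∈ Finset.range m, ξ i ω : ℕ) : ZMod n)) = r - s}) := by
    intro s _ t _ hst
    refine Set.disjoint_left.2 fun ω h1 h2 => hst ?_
    rw [← h1.1, ← h2.1]
  have hm' : ∀ s ∈ (Finset.univ : Finset (ZMod n)),
      MeasurableSet ({ω | (((ξ m ω : ℕ) : ZMod n)) = s} ∩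
        {ω | (((∑ i ∈ Finset.range m, ξ i ω : ℕ) : ZMod n)) = r - s}) := by
    intro s _
    refine MeasurableSet.inter ?_ ?_
    · exact (hmeas m) (MeasurableSet.of_discrete (s := {k : ℕ | (k : ZMod n) = s}))
    · exact (Finset.measurable_sum _ (fun i _ => hmeas i))
        (MeasurableSet.of_discrete (s := {k : ℕ | (k : ZMod n) = r - s}))
  rw [hset, measure_biUnion_finset hd hm']
  refine Finset.sum_congr rfl fun s _ => ?_
  have key := hind.measure_inter_preimage_eq_mul {k : ℕ | (k : ZMod n) = s}
      {k : ℕ | (k : ZMod n) = r - s} MeasurableSet.of_discrete MeasurableSet.of_discrete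
  have e1 : (ξ m) ⁻¹' {k : ℕ | (k : ZMod n) = s} = {ω | (((ξ m ω : ℕ) : ZMod n)) = s} := rfl
  have e2 : (∑ i ∈ Finset.range m, ξ i) ⁻¹' {k : ℕ | (k : ZMod n) = r - s}
      = {ω | (((∑ i ∈ Finset.range m, ξ i ω : ℕ) : ZMod n)) = r - s} := by
    ext ω
    simp [Set.mem_preimage, hsum_apply ω]
  rw [e1, e2] at key
  exact key

/-- Pointwise description of the fractional-part event. -/
lemma geom_fract_iff (n j : ℕ) (hn : 1 ≤ n) (hj : j < n) (S m : ℕ) :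
    Int.fract (((S : ℝ) - 2 * m) / n) = (j : ℝ) / n ↔
      ((S : ZMod n)) = ((j + 2 * m : ℕ) : ZMod n) := by
  have hn0 : (0 : ℝ) < n := by exact_mod_cast hn
  have h1 : ((S : ℝ) - 2 * m) = (((S : ℤ) - 2 * m : ℤ) : ℝ) := by push_cast; ring
  rw [h1, Int.fract_div_intCast_eq_div_intCast_mod]
  have hmod : (((S : ℤ) - 2 * m) % n = (j : ℤ)) ↔
      ((S : ZMod n)) = ((j + 2 * m : ℕ) : ZMod n) := by
    have hjn : (j : ℤ) % n = j := Int.emod_eq_of_lt (by positivity) (by exact_mod_cast hj)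
    constructor
    · intro h
      have : (((S : ℤ) - 2 * m : ℤ) : ZMod n) = ((j : ℤ) : ZMod n) := by
        rw [ZMod.intCast_eq_intCast_iff]
        show ((S : ℤ) - 2 * m) % n = (j : ℤ) % n
        rw [h, hjn]
      push_cast at this ⊢
      linear_combination this
    · intro h
      have h2 : (((S : ℤ) - 2 * m : ℤ) : ZMod n) = ((j : ℤ) : ZMod n) := by
        push_cast at h ⊢
        linear_combination h
      rw [ZMod.intCast_eq_intCast_iff] at h2
      have h3 : ((S : ℤ) - 2 * m) % n = (j : ℤ) % n := h2
      rw [hjn] at h3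
      exact h3
  constructor
  · intro h
    rw [← hmod]
    have : ((((S : ℤ) - 2 * m) % n : ℤ) : ℝ) = (j : ℝ) := by
      field_simp at h
      exact_mod_cast h
    exact_mod_cast this
  · intro h
    rw [← hmod] at h
    rw [h]
    push_cast
    ring

end Aux

/-- If `S_m` is a sum of `m` i.i.d. geometric(1/2) random variables and `n ≥ 1` is an
integer, then for each `j ∈ {0, …, n-1}`,
`P((S_m - 2m)/n mod 1 = j/n) → 1/n` as `m → ∞`. -/
theorem geometric_sum_mod_one_uniform_on_lattice
    {Ω : Type*} [MeasurableSpace Ω] (μ : Measure Ω)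
    [IsProbabilityMeasure μ] (ξ : ℕ → Ω → ℕ) (hmeas : ∀ i, Measurable (ξ i))
    (hindep : ProbabilityTheory.iIndepFun ξ μ)
    (hdist : ∀ i, ∀ k : ℕ, 1 ≤ k → μ {ω | ξ i ω = k} = ENNReal.ofReal ((1 : ℝ) / 2 ^ k))
    (n : ℕ) (hn : 1 ≤ n) (j : ℕ) (hj : j < n) :
    Filter.Tendsto
      (fun m : ℕ => (μ {ω | Int.fract
        (((∑ i ∈ Finset.range m, (ξ i ω : ℝ)) - 2 * m) / n) = (j : ℝ) / n}).toReal)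
      Filter.atTop (nhds (1 / (n : ℝ))) := by
  haveI : NeZero n := ⟨by omega⟩
  have hn0 : (0 : ℝ) < n := by exact_mod_cast hn
  set P : ℕ → ZMod n → ℝ :=
    fun m r => (μ {ω | (((∑ i ∈ Finset.range m, ξ i ω : ℕ) : ZMod n)) = r}).toReal with hPdef
  set Q : ℕ → ZMod n → ℝ :=
    fun m s => (μ {ω | (((ξ m ω : ℕ) : ZMod n)) = s}).toReal with hQdef
  set δ : ℝ := 1 / 2 ^ n with hδdef
  set c : ℝ := 1 - n * δ with hcdef
  have hδpos : 0 < δ := by positivity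
  have hfin : ∀ A : Set Ω, μ A ≠ ⊤ := fun A => (measure_lt_top μ A).ne
  -- sums over residues are 1
  have hQsum : ∀ m, ∑ s : ZMod n, Q m s = 1 := by
    intro m
    have := geom_zmod_partition μ n (ξ m) (hmeas m)
    have h2 : (∑ s : ZMod n, μ {ω | (((ξ m ω : ℕ) : ZMod n)) = s}).toReal = 1 := by
      rw [this]; simp
    rw [ENNReal.toReal_sum (fun a _ => hfin _)] at h2
    exact h2
  have hPsum : ∀ m, ∑ r : ZMod n, P m r = 1 := by
    intro m
    have := geom_zmod_partition μ n (fun ω => ∑ i ∈ Finset.range m, ξ i ω)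
      (Finset.measurable_sum _ (fun i _ => hmeas i))
    have h2 : (∑ s : ZMod n, μ {ω | (((∑ i ∈ Finset.range m, ξ i ω : ℕ) : ZMod n)) = s}).toReal
        = 1 := by rw [this]; simp
    rw [ENNReal.toReal_sum (fun a _ => hfin _)] at h2
    exact h2
  have hQlb : ∀ m s, δ ≤ Q m s := by
    intro m s
    have := geom_q_lower μ (ξ m) (hdist m) n s
    have h2 := ENNReal.toReal_mono (hfin _) this
    rwa [ENNReal.toReal_ofReal hδpos.le] at h2
  have hP01 : ∀ m r, 0 ≤ P m r ∧ P m r ≤ 1 := by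
    intro m r
    refine ⟨ENNReal.toReal_nonneg, ?_⟩
    have h1 : μ {ω | (((∑ i ∈ Finset.range m, ξ i ω : ℕ) : ZMod n)) = r} ≤ 1 := prob_le_one
    have h2 := ENNReal.toReal_mono (by simp : (1 : ENNReal) ≠ ⊤) h1
    rwa [ENNReal.toReal_one] at h2
  have hcard : (Fintype.card (ZMod n) : ℝ) = (n : ℝ) := by rw [ZMod.card]
  have hc0 : 0 ≤ c := by
    have h1 : (n : ℝ) ≤ 2 ^ n := by exact_mod_cast (Nat.lt_two_pow_self (n := n)).le
    rw [hcdef, hδdef]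
    rw [sub_nonneg]
    rw [mul_one_div, div_le_one (by positivity)]
    exact h1
  have hc1 : c < 1 := by
    rw [hcdef]
    have : 0 < (n : ℝ) * δ := by positivity
    linarith
  -- convolution recursion in ℝ
  have hrec : ∀ m r, P (m + 1) r = ∑ s : ZMod n, Q m s * P m (r - s) := by
    intro m r
    have := geom_rec_step μ ξ hmeas hindep n m r
    have h2 := congrArg ENNReal.toReal this
    rw [ENNReal.toReal_sum (fun a _ => ENNReal.mul_ne_top (hfin _) (hfin _))] at h2
    simp only [ENNReal.toReal_mul] at h2
    exact h2
  -- centered recursion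
  have hstep : ∀ m r, P (m + 1) r - 1 / n
      = ∑ s : ZMod n, (Q m s - δ) * (P m (r - s) - 1 / n) := by
    intro m r
    have hPs : ∑ s : ZMod n, P m (r - s) = 1 := by
      rw [← hPsum m]
      exact Fintype.sum_equiv (Equiv.subLeft r) _ _ (fun s => rfl)
    have hexp : ∀ s : ZMod n, (Q m s - δ) * (P m (r - s) - 1 / n)
        = Q m s * P m (r - s) - (1 / n) * Q m s - δ * P m (r - s) + δ * (1 / n) :=
      fun s => by ring
    rw [hrec m r]
    simp_rw [hexp]
    rw [Finset.sum_add_distrib, Finset.sum_sub_distrib, Finset.sum_sub_distrib,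
      ← Finset.mul_sum, ← Finset.mul_sum, hQsum m, hPs, Finset.sum_const,
      Finset.card_univ, nsmul_eq_mul, hcard]
    field_simp
    ring
  -- main contraction estimate
  have hmain : ∀ m r, |P m r - 1 / n| ≤ c ^ m := by
    intro m
    induction m with
    | zero =>
      intro r
      have h1 := hP01 0 r
      have h2 : (1 : ℝ) / n ≤ 1 := by
        rw [div_le_one hn0]; exact_mod_cast hn
      have h3 : (0 : ℝ) < 1 / n := by positivity
      rw [pow_zero, abs_le]
      constructor <;> nlinarith [h1.1, h1.2]
    | succ m ih =>
      intro r
      rw [pow_succ, hstep m r]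
      calc |∑ s : ZMod n, (Q m s - δ) * (P m (r - s) - 1 / n)|
          ≤ ∑ s : ZMod n, |(Q m s - δ) * (P m (r - s) - 1 / n)| :=
            Finset.abs_sum_le_sum_abs _ _
        _ ≤ ∑ s : ZMod n, (Q m s - δ) * c ^ m := by
            refine Finset.sum_le_sum fun s _ => ?_
            rw [abs_mul, abs_of_nonneg (by linarith [hQlb m s])]
            exact mul_le_mul_of_nonneg_left (ih (r - s)) (by linarith [hQlb m s])
        _ = c * c ^ m := by
            rw [← Finset.sum_mul, Finset.sum_sub_distrib, hQsum m, Finset.sum_const,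
              Finset.card_univ, nsmul_eq_mul, hcard, ← hcdef]
        _ = c ^ m * c := by ring
  -- identify the events
  have hev : ∀ m : ℕ,
      {ω : Ω | Int.fract (((∑ i ∈ Finset.range m, (ξ i ω : ℝ)) - 2 * m) / n) = (j : ℝ) / n}
        = {ω : Ω | (((∑ i ∈ Finset.range m, ξ i ω : ℕ) : ZMod n))
            = ((j + 2 * m : ℕ) : ZMod n)} := by
    intro m
    ext ω
    have hcast : (∑ i ∈ Finset.range m, (ξ i ω : ℝ))
        = ((∑ i ∈ Finset.range m, ξ i ω : ℕ) : ℝ) := by push_cast; rfl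
    simp only [Set.mem_setOf_eq, hcast]
    exact geom_fract_iff n j hn hj (∑ i ∈ Finset.range m, ξ i ω) m
  have hfun : (fun m : ℕ => (μ {ω | Int.fract
        (((∑ i ∈ Finset.range m, (ξ i ω : ℝ)) - 2 * m) / n) = (j : ℝ) / n}).toReal)
      = fun m : ℕ => P m ((j + 2 * m : ℕ) : ZMod n) := by
    funext m
    rw [hev m]
  rw [hfun]
  rw [tendsto_iff_dist_tendsto_zero]
  refine squeeze_zero (fun m => dist_nonneg) (fun m => ?_)
    (tendsto_pow_atTop_nhds_zero_of_lt_one hc0 hc1)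
  rw [Real.dist_eq]
  exact hmain m _
end
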